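/- Let 0 < c < 1 and ε > 0. The function G(w) = c w + ε/w − conj(w) has exactly four zeros: two sense-preserving zeros ± i (ε/(1+c))^{1/2} and two sense-reversing zeros ± (ε/(1−c))^{1/2}. -/

import Mathlib

/-- For `0 < c < 1` and `ε > 0`, the function `G(w) = cw + ε/w − conj w` has exactly four
zeros: two sense-preserving zeros `± i√(ε/(1+c))` and two sense-reversing zeros
`± √(ε/(1−c))`, where a zero `w` is sense-preserving if `|R_G'(w)| = |c − ε/w²| > 1` and
sense-reversing if `|c − ε/w²| < 1`. -/
theorem two_preserving_two_reversing_zeros (c ε : ℝ) (hc0 : 0 < c) (hc1 : c < 1)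
    (hε : 0 < ε) :
    (∀ w : ℂ, w ≠ 0 →
      ((c : ℂ) * w + (ε : ℂ) / w - (starRingEnd ℂ) w = 0 ↔
        w = Complex.I * (Real.sqrt (ε / (1 + c)) : ℂ) ∨
        w = -(Complex.I * (Real.sqrt (ε / (1 + c)) : ℂ)) ∨
        w = (Real.sqrt (ε / (1 - c)) : ℂ) ∨
        w = -(Real.sqrt (ε / (1 - c)) : ℂ))) ∧
    (∀ w : ℂ, (w = Complex.I * (Real.sqrt (ε / (1 + c)) : ℂ) ∨
        w = -(Complex.I * (Real.sqrt (ε / (1 + c)) : ℂ))) →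
      1 < ‖(c : ℂ) - (ε : ℂ) / w ^ 2‖) ∧
    ∀ w : ℂ, (w = (Real.sqrt (ε / (1 - c)) : ℂ) ∨
        w = -(Real.sqrt (ε / (1 - c)) : ℂ)) →
      ‖(c : ℂ) - (ε : ℂ) / w ^ 2‖ < 1 := by
  have h1p : (0:ℝ) < 1 + c := by linarith
  have h1m : (0:ℝ) < 1 - c := by linarith
  set s := Real.sqrt (ε / (1 + c)) with hsdef
  set t := Real.sqrt (ε / (1 - c)) with htdef
  have hs2 : s ^ 2 = ε / (1 + c) := Real.sq_sqrt (by positivity)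
  have ht2 : t ^ 2 = ε / (1 - c) := Real.sq_sqrt (by positivity)
  have hs : 0 < s := Real.sqrt_pos.mpr (by positivity)
  have ht : 0 < t := Real.sqrt_pos.mpr (by positivity)
  have hsR : s ^ 2 * (1 + c) = ε := by rw [hs2]; field_simp
  have htR : t ^ 2 * (1 - c) = ε := by rw [ht2]; field_simp
  have hsC' : (s:ℂ) ^ 2 * ((1:ℂ) + c) = (ε:ℂ) := by exact_mod_cast hsR
  have htC' : (t:ℂ) ^ 2 * ((1:ℂ) - c) = (ε:ℂ) := by exact_mod_cast htR
  have hsne : (s:ℂ) ≠ 0 := by exact_mod_cast ne_of_gt hs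
  have htne : (t:ℂ) ≠ 0 := by exact_mod_cast ne_of_gt ht
  refine ⟨?_, ?_, ?_⟩
  · intro w hw
    constructor
    · intro h
      have key : (c:ℂ) * w ^ 2 + (ε:ℂ) = (starRingEnd ℂ) w * w := by
        field_simp at h
        linear_combination h
      obtain ⟨x, y⟩ := w
      have hre : c * (x * x - y * y) + ε = x * x + y * y := by
        have := congrArg Complex.re key
        simpa [Complex.mul_re, Complex.mul_im, pow_two] using this
      have him : c * (x * y + y * x) = x * y + -(y * x) := by
        have := congrArg Complex.im key
        simpa [Complex.mul_re, Complex.mul_im, pow_two] using this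
      have h2 : c * (x * y) = 0 := by linear_combination him / 2
      have hxy : x * y = 0 := by
        rcases mul_eq_zero.mp h2 with h' | h'
        · exact absurd h' (ne_of_gt hc0)
        · exact h'
      rcases mul_eq_zero.mp hxy with hx | hy
      · -- x = 0, pure imaginary: y² = s²
        have hy2 : y ^ 2 = s ^ 2 := by
          have he : y ^ 2 * (1 + c) = ε := by
            linear_combination -hre - (x - c * x) * hx
          exact mul_right_cancel₀ (ne_of_gt h1p) (by linarith [he, hsR])
        have : (y - s) * (y + s) = 0 := by linear_combination hy2
        rcases mul_eq_zero.mp this with h' | h'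
        · left
          have hy' : y = s := by linarith
          apply Complex.ext <;> simp [hx, hy', Complex.mul_re, Complex.mul_im]
        · right; left
          have hy' : y = -s := by linarith
          apply Complex.ext <;> simp [hx, hy', Complex.mul_re, Complex.mul_im]
      · -- y = 0, real: x² = t²
        have hx2 : x ^ 2 = t ^ 2 := by
          have he : x ^ 2 * (1 - c) = ε := by
            linear_combination -hre - (y + c * y) * hy
          exact mul_right_cancel₀ (ne_of_gt h1m) (by linarith [he, htR])
        have : (x - t) * (x + t) = 0 := by linear_combination hx2
        rcases mul_eq_zero.mp this with h' | h'
        · right; right; left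
          have hx' : x = t := by linarith
          apply Complex.ext <;> simp [hy, hx']
        · right; right; right
          have hx' : x = -t := by linarith
          apply Complex.ext <;> simp [hy, hx']
    · intro h
      rcases h with h | h | h | h <;> subst h <;>
        simp only [map_mul, Complex.conj_I, Complex.conj_ofReal, map_neg] <;>
        field_simp <;> ring_nf
      · linear_combination ((1:ℂ) + c) * (s:ℂ) ^ 2 * Complex.I_sq - hsC'
      · linear_combination -((1:ℂ) + c) * (s:ℂ) ^ 2 * Complex.I_sq + hsC'
      · linear_combination -htC'
      · linear_combination htC'
  · intro w h
    have hw2 : w ^ 2 * ((1:ℂ) + c) = -(ε:ℂ) := by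
      rcases h with h | h <;> subst h <;>
        linear_combination (s:ℂ) ^ 2 * ((1:ℂ) + c) * Complex.I_sq - hsC'
    have hwne : w ^ 2 ≠ 0 := by
      intro h0
      rw [h0, zero_mul] at hw2
      have : (ε:ℂ) = 0 := by linear_combination hw2
      exact (Complex.ofReal_ne_zero.mpr (ne_of_gt hε)) this
    have hdiv : (ε:ℂ) / w ^ 2 = -((1:ℂ) + c) := by
      rw [div_eq_iff hwne]
      linear_combination hw2
    have hval : (c:ℂ) - (ε:ℂ) / w ^ 2 = ((1 + 2 * c : ℝ) : ℂ) := by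
      rw [hdiv]; push_cast; ring
    rw [hval, Complex.norm_real, Real.norm_eq_abs, abs_of_pos (by linarith)]
    linarith
  · intro w h
    have hw2 : w ^ 2 * ((1:ℂ) - c) = (ε:ℂ) := by
      rcases h with h | h <;> subst h <;> linear_combination htC'
    have hwne : w ^ 2 ≠ 0 := by
      intro h0
      rw [h0, zero_mul] at hw2
      exact (Complex.ofReal_ne_zero.mpr (ne_of_gt hε)) hw2.symm
    have hdiv : (ε:ℂ) / w ^ 2 = (1:ℂ) - c := by
      rw [div_eq_iff hwne]
      linear_combination -hw2
    have hval : (c:ℂ) - (ε:ℂ) / w ^ 2 = ((2 * c - 1 : ℝ) : ℂ) := by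
      rw [hdiv]; push_cast; ring
    rw [hval, Complex.norm_real, Real.norm_eq_abs]
    rw [abs_lt]
    constructor <;> linarith
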